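/- Let r_k, r'_k ∈ Δ^{n_k} for k = 1,…,m. Then, with respect to the metric induced by the ℓ¹-norm on ℝ^{n_1×⋯×n_m}, the Hausdorff distance between the sets B(r'_1,…,r'_m) and B(r_1,…,r_m) is at most 2 Σ_{k=1}^m ||r_k − r'_k||_1. -/

import Mathlib

open Finset

namespace MOT

/-- The index set of a tensor with mode sizes `n 0, …, n (m-1)`. -/
abbrev Idx {m : ℕ} (n : Fin m → ℕ) := ∀ k : Fin m, Fin (n k)

/-- A real tensor of order `m` with mode sizes `n k`. -/
abbrev Tensor {m : ℕ} (n : Fin m → ℕ) := Idx n → ℝ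

/-- The `k`-th marginal of a tensor: `(r_k(X))_j = ∑_{I : i_k = j} X_I`. -/
noncomputable def marginal {m : ℕ} {n : Fin m → ℕ} (X : Tensor n) (k : Fin m)
    (j : Fin (n k)) : ℝ :=
  ∑ I : Idx n, if I k = j then X I else 0

/-- The entrywise ℓ¹-norm of a tensor. -/
noncomputable def tnorm1 {m : ℕ} {n : Fin m → ℕ} (X : Tensor n) : ℝ :=
  ∑ I : Idx n, |X I|

/-- The uniform norm (maximum absolute entry) of a real-valued family. -/
noncomputable def supAbs {ι : Type*} (X : ι → ℝ) : ℝ := ⨆ i, |X i|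

/-- The ℓ¹-norm of a vector. -/
noncomputable def vnorm1 {N : ℕ} (v : Fin N → ℝ) : ℝ := ∑ j, |v j|

/-- The Euclidean norm of a vector. -/
noncomputable def vnorm2 {N : ℕ} (v : Fin N → ℝ) : ℝ := Real.sqrt (∑ j, v j ^ 2)

/-- The Euclidean inner product of two vectors. -/
noncomputable def vinner {N : ℕ} (v w : Fin N → ℝ) : ℝ := ∑ j, v j * w j

/-- `v ∈ Δ^N`: entrywise strictly positive with entries summing to 1. -/
def IsSimplex {N : ℕ} (v : Fin N → ℝ) : Prop := (∀ j, 0 < v j) ∧ ∑ j, v j = 1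

/-- `P ∈ B(r_1,…,r_m)`: entrywise nonnegative with prescribed marginals. -/
def Feasible {m : ℕ} {n : Fin m → ℕ} (r : ∀ k : Fin m, Fin (n k) → ℝ)
    (P : Tensor n) : Prop :=
  (∀ I, 0 ≤ P I) ∧ ∀ k j, marginal P k j = r k j

/-- The entropy `H(P) = -∑_I P_I log P_I` (with `0 · log 0 = 0`). -/
noncomputable def entropy {m : ℕ} {n : Fin m → ℕ} (P : Tensor n) : ℝ :=
  -∑ I : Idx n, P I * Real.log (P I)

/-- The inner product `⟨X, Y⟩ = ∑_I X_I Y_I` of two tensors. -/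
noncomputable def tinner {m : ℕ} {n : Fin m → ℕ} (X Y : Tensor n) : ℝ :=
  ∑ I : Idx n, X I * Y I

/-- The entropic transport cost `V_C^η(P) = ⟨C, P⟩ − η H(P)`. -/
noncomputable def entCost {m : ℕ} {n : Fin m → ℕ} (C : Tensor n) (η : ℝ)
    (P : Tensor n) : ℝ :=
  tinner C P - η * entropy P

/-- `P` is a positive diagonal scaling of `K`. -/
def IsScaling {m : ℕ} {n : Fin m → ℕ} (K P : Tensor n) : Prop :=
  ∃ β : ∀ k : Fin m, Fin (n k) → ℝ, ∀ I, P I = K I * ∏ k, Real.exp (β k (I k))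

end MOT
namespace MOT

/-- The transport polytope `B(r_1,…,r_m)` as a subset of the tensor space equipped with the
ℓ¹-norm (realized as `PiLp 1`). -/
noncomputable def BSet {m : ℕ} {n : Fin m → ℕ} (r : ∀ k : Fin m, Fin (n k) → ℝ) :
    Set (PiLp 1 (fun _ : Idx n => ℝ)) :=
  {P | Feasible r ((WithLp.equiv 1 (Idx n → ℝ)) P)}


lemma sum_mul_marginal {m : ℕ} {n : Fin m → ℕ} (X : Tensor n) (k : Fin m)
    (c : Fin (n k) → ℝ) :
    ∑ j, c j * marginal X k j = ∑ I : Idx n, c (I k) * X I := by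
  unfold marginal
  simp only [Finset.mul_sum]
  rw [Finset.sum_comm]
  refine Finset.sum_congr rfl fun I _ => ?_
  simp only [mul_ite, mul_zero]
  rw [Finset.sum_ite_eq univ (I k) (fun j => c j * X I)]
  simp

lemma sum_marginal {m : ℕ} {n : Fin m → ℕ} (X : Tensor n) (k : Fin m) :
    ∑ j, marginal X k j = ∑ I : Idx n, X I := by
  have := sum_mul_marginal X k (fun _ => 1)
  simpa using this

lemma sum_prod_eq {m : ℕ} {n : Fin m → ℕ} (h : ∀ k : Fin m, Fin (n k) → ℝ) :
    ∑ I : Idx n, ∏ l, h l (I l) = ∏ l, ∑ j, h l j := by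
  rw [Finset.prod_univ_sum, Fintype.piFinset_univ]

lemma marginal_prod {m : ℕ} {n : Fin m → ℕ} (h : ∀ k : Fin m, Fin (n k) → ℝ)
    (k : Fin m) (j : Fin (n k)) :
    marginal (fun I => ∏ l, h l (I l)) k j
      = h k j * ∏ l ∈ univ.erase k, ∑ j', h l j' := by
  classical
  set h' : ∀ l, Fin (n l) → ℝ :=
    Function.update h k (fun j' => if j' = j then h k j else 0) with hh'
  have hne : ∀ l ∈ univ.erase k, h' l = h l := fun l hl => by
    rw [hh', Function.update_of_ne (Finset.ne_of_mem_erase hl)]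
  have hstep : ∀ I : Idx n,
      (if I k = j then ∏ l, h l (I l) else 0) = ∏ l, h' l (I l) := by
    intro I
    have e1 : ∏ l, h' l (I l) = h' k (I k) * ∏ l ∈ univ.erase k, h' l (I l) :=
      (Finset.mul_prod_erase univ _ (mem_univ k)).symm
    have e2 : ∏ l, h l (I l) = h k (I k) * ∏ l ∈ univ.erase k, h l (I l) :=
      (Finset.mul_prod_erase univ _ (mem_univ k)).symm
    have e3 : ∏ l ∈ univ.erase k, h' l (I l) = ∏ l ∈ univ.erase k, h l (I l) :=
      Finset.prod_congr rfl fun l hl => by rw [hne l hl]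
    have e4 : h' k (I k) = if I k = j then h k j else 0 := by
      rw [hh', Function.update_self]
    rw [e1, e3, e4]
    by_cases hIk : I k = j
    · simp [hIk, e2]
    · simp [hIk]
  unfold marginal
  rw [Finset.sum_congr rfl (fun I _ => hstep I), sum_prod_eq,
    ← Finset.mul_prod_erase univ (fun l => ∑ j', h' l j') (mem_univ k)]
  congr 1
  · rw [hh', Function.update_self]
    simp
  · exact Finset.prod_congr rfl fun l hl => by rw [hne l hl]

lemma marginal_add {m : ℕ} {n : Fin m → ℕ} (X Y : Tensor n) (k : Fin m) (j : Fin (n k)) :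
    marginal (fun I => X I + Y I) k j = marginal X k j + marginal Y k j := by
  unfold marginal
  rw [← Finset.sum_add_distrib]
  exact Finset.sum_congr rfl fun I _ => by split <;> simp

lemma marginal_mul_const {m : ℕ} {n : Fin m → ℕ} (X : Tensor n) (c : ℝ) (k : Fin m) (j : Fin (n k)) :
    marginal (fun I => X I * c) k j = marginal X k j * c := by
  unfold marginal
  rw [Finset.sum_mul]
  exact Finset.sum_congr rfl fun I _ => by split <;> simp

lemma one_sub_prod_le {m : ℕ} (g : Fin m → ℝ) (h0 : ∀ k, 0 ≤ g k) (h1 : ∀ k, g k ≤ 1) :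
    1 - ∏ k, g k ≤ ∑ k, (1 - g k) := by
  classical
  have key : ∀ s : Finset (Fin m), 1 - ∏ k ∈ s, g k ≤ ∑ k ∈ s, (1 - g k) := by
    intro s
    induction s using Finset.induction_on with
    | empty => simp
    | insert _ _ ha ih =>
      rename_i a s
      rw [Finset.prod_insert ha, Finset.sum_insert ha]
      have hp1 : ∏ k ∈ s, g k ≤ 1 :=
        Finset.prod_le_one (fun k _ => h0 k) (fun k _ => h1 k)
      have hp0 : (0:ℝ) ≤ ∏ k ∈ s, g k := Finset.prod_nonneg (fun k _ => h0 k)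
      nlinarith [h0 a, h1 a]
  exact key univ

lemma dist_pilp {ι : Type*} [Fintype ι] (x y : PiLp 1 fun _ : ι => ℝ) :
    dist x y = ∑ i, |x i - y i| := by
  rw [PiLp.dist_eq_sum (by norm_num : 0 < (1:ENNReal).toReal)]
  simp [Real.dist_eq]



lemma approx {m : ℕ} {n : Fin m → ℕ} (hm : 0 < m)
    (r r' : ∀ k : Fin m, Fin (n k) → ℝ)
    (hr : ∀ k, IsSimplex (r k)) (hr' : ∀ k, IsSimplex (r' k))
    (P : Tensor n) (hP : Feasible r' P) :
    ∃ Q : Tensor n, Feasible r Q ∧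
      ∑ I : Idx n, |P I - Q I| ≤ 2 * ∑ k, vnorm1 (fun j => r k j - r' k j) := by
  classical
  obtain ⟨hP0, hPm⟩ := hP
  have hr'pos : ∀ k j, 0 < r' k j := fun k j => (hr' k).1 j
  set g : ∀ k : Fin m, Fin (n k) → ℝ := fun k j => min (r k j) (r' k j) / r' k j with hg
  have hg0 : ∀ k j, 0 ≤ g k j := fun k j =>
    div_nonneg (le_min ((hr k).1 j).le (hr'pos k j).le) (hr'pos k j).le
  have hg1 : ∀ k j, g k j ≤ 1 := fun k j =>
    (div_le_one (hr'pos k j)).mpr (min_le_right _ _)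
  have hgr' : ∀ k j, g k j * r' k j = min (r k j) (r' k j) := fun k j =>
    div_mul_cancel₀ _ (hr'pos k j).ne'
  set P' : Tensor n := fun I => P I * ∏ l, g l (I l) with hP'
  have hP'0 : ∀ I, 0 ≤ P' I := fun I =>
    mul_nonneg (hP0 I) (Finset.prod_nonneg fun l _ => hg0 l (I l))
  have hprod01 : ∀ I : Idx n, ∏ l, g l (I l) ≤ 1 := fun I =>
    Finset.prod_le_one (fun l _ => hg0 l (I l)) (fun l _ => hg1 l (I l))
  have hP'leP : ∀ I, P' I ≤ P I := fun I =>
    mul_le_of_le_one_right (hP0 I) (hprod01 I)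
  have hmarg : ∀ k j, marginal P' k j ≤ min (r k j) (r' k j) := by
    intro k j
    have h1 : marginal P' k j ≤ g k j * marginal P k j := by
      unfold marginal
      rw [Finset.mul_sum]
      apply Finset.sum_le_sum
      intro I _
      by_cases hI : I k = j
      · rw [if_pos hI, mul_ite, mul_zero, if_pos hI]
        have hle : ∏ l, g l (I l) ≤ g k (I k) := by
          rw [← Finset.mul_prod_erase univ (fun l => g l (I l)) (mem_univ k)]
          exact mul_le_of_le_one_right (hg0 k (I k))
            (Finset.prod_le_one (fun l _ => hg0 l (I l)) (fun l _ => hg1 l (I l)))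
        calc P' I ≤ P I * g k (I k) :=
              mul_le_mul_of_nonneg_left hle (hP0 I)
          _ = g k j * P I := by rw [hI, mul_comm]
      · rw [if_neg hI, mul_ite, mul_zero, if_neg hI]
    calc marginal P' k j ≤ g k j * marginal P k j := h1
      _ = min (r k j) (r' k j) := by rw [hPm k j, hgr' k j]
  have hPsum : ∑ I : Idx n, P I = 1 := by
    obtain k0 : Fin m := ⟨0, hm⟩
    calc ∑ I : Idx n, P I = ∑ j, marginal P k0 j := (sum_marginal P k0).symm
      _ = ∑ j, r' k0 j := by simp [hPm]
      _ = 1 := (hr' k0).2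
  set e : ∀ k : Fin m, Fin (n k) → ℝ := fun k j => r k j - marginal P' k j with he
  have he0 : ∀ k j, 0 ≤ e k j := fun k j =>
    sub_nonneg.mpr ((hmarg k j).trans (min_le_left _ _))
  set D : ℝ := ∑ I : Idx n, (P I - P' I) with hD
  have hD0 : 0 ≤ D := Finset.sum_nonneg fun I _ => sub_nonneg.mpr (hP'leP I)
  have hsumP' : ∑ I : Idx n, P' I = 1 - D := by
    rw [hD, Finset.sum_sub_distrib, hPsum]; ring
  have hesum : ∀ k, ∑ j, e k j = D := by
    intro k
    rw [he]
    simp only []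
    rw [Finset.sum_sub_distrib, (hr k).2, sum_marginal, hsumP']
    ring
  -- bound on D
  have hterm : ∀ k j, (1 - g k j) * r' k j ≤ |r k j - r' k j| := by
    intro k j
    rw [one_sub_mul, hgr' k j]
    rcases le_total (r k j) (r' k j) with h | h
    · rw [min_eq_left h, abs_sub_comm, abs_of_nonneg (by linarith)]
    · rw [min_eq_right h]
      simp [abs_nonneg]
  have hDle : D ≤ ∑ k, vnorm1 (fun j => r k j - r' k j) := by
    have step1 : D = ∑ I : Idx n, P I * (1 - ∏ l, g l (I l)) :=
      Finset.sum_congr rfl fun I _ => by rw [hP']; ring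
    have step2 : D ≤ ∑ I : Idx n, ∑ k, (1 - g k (I k)) * P I := by
      rw [step1]
      apply Finset.sum_le_sum
      intro I _
      calc P I * (1 - ∏ l, g l (I l))
          ≤ P I * ∑ k, (1 - g k (I k)) :=
            mul_le_mul_of_nonneg_left
              (one_sub_prod_le (fun l => g l (I l)) (fun l => hg0 l (I l))
                (fun l => hg1 l (I l))) (hP0 I)
        _ = ∑ k, (1 - g k (I k)) * P I := by rw [Finset.mul_sum]; simp [mul_comm]
    refine step2.trans ?_
    rw [Finset.sum_comm]
    apply Finset.sum_le_sum
    intro k _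
    rw [← sum_mul_marginal P k (fun j => 1 - g k j)]
    unfold vnorm1
    apply Finset.sum_le_sum
    intro j _
    rw [hPm k j]
    exact hterm k j
  have hSnn : 0 ≤ ∑ k, vnorm1 (fun j => r k j - r' k j) :=
    Finset.sum_nonneg fun k _ => Finset.sum_nonneg fun j _ => abs_nonneg _
  rcases eq_or_lt_of_le hD0 with hDz | hDpos
  · -- D = 0 : P' works
    have hez : ∀ k j, e k j = 0 := by
      intro k j
      have := (Finset.sum_eq_zero_iff_of_nonneg (fun j _ => he0 k j)).mp
        (by rw [hesum k, ← hDz])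
      exact this j (mem_univ j)
    refine ⟨P', ⟨hP'0, fun k j => ?_⟩, ?_⟩
    · have := hez k j
      rw [he] at this
      simp only [] at this
      linarith
    · have : ∑ I : Idx n, |P I - P' I| = D :=
        Finset.sum_congr rfl fun I _ => abs_of_nonneg (sub_nonneg.mpr (hP'leP I))
      rw [this, ← hDz]
      positivity
  · -- D > 0
    have hDpow : 0 < D ^ (m - 1) := pow_pos hDpos _
    set Q : Tensor n := fun I : Idx n => P' I + (∏ l, e l (I l)) / D ^ (m - 1) with hQ
    have hcorr0 : ∀ I : Idx n, 0 ≤ (∏ l, e l (I l)) / D ^ (m - 1) := fun I =>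
      div_nonneg (Finset.prod_nonneg fun l _ => he0 l (I l)) hDpow.le
    have hmargQ : ∀ k j, marginal Q k j = r k j := by
      intro k j
      have h2 : marginal (fun I : Idx n => (∏ l, e l (I l)) / D ^ (m - 1)) k j = e k j := by
        have := marginal_mul_const (fun I : Idx n => ∏ l, e l (I l)) (D ^ (m - 1))⁻¹ k j
        simp only [← div_eq_mul_inv] at this
        rw [this, marginal_prod]
        have : ∏ l ∈ univ.erase k, ∑ j', e l j' = D ^ (m - 1) := by
          rw [Finset.prod_congr rfl fun l _ => hesum l, Finset.prod_const,
            Finset.card_erase_of_mem (mem_univ k), Finset.card_univ, Fintype.card_fin]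
        rw [this, mul_div_cancel_right₀ _ hDpow.ne']
      rw [hQ, marginal_add, h2]
      rw [he]
      simp only []
      ring
    refine ⟨Q, ⟨fun I => add_nonneg (hP'0 I) (hcorr0 I), hmargQ⟩, ?_⟩
    have hsumcorr : ∑ I : Idx n, (∏ l, e l (I l)) / D ^ (m - 1) = D := by
      rw [← Finset.sum_div, sum_prod_eq, Finset.prod_congr rfl fun l _ => hesum l,
        Finset.prod_const, Finset.card_univ, Fintype.card_fin]
      have hpow : D ^ m = D ^ (m - 1) * D := by
        conv_lhs => rw [show m = (m - 1) + 1 from (Nat.succ_pred_eq_of_pos hm).symm]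
        rw [pow_succ]
      rw [hpow, mul_comm, mul_div_assoc, div_self hDpow.ne', mul_one]
    calc ∑ I : Idx n, |P I - Q I|
        ≤ ∑ I : Idx n, ((P I - P' I) + (∏ l, e l (I l)) / D ^ (m - 1)) := by
          apply Finset.sum_le_sum
          intro I _
          rw [hQ]
          have h1 : 0 ≤ P I - P' I := sub_nonneg.mpr (hP'leP I)
          have h2 := hcorr0 I
          rw [show P I - (P' I + (∏ l, e l (I l)) / D ^ (m - 1))
              = (P I - P' I) - (∏ l, e l (I l)) / D ^ (m - 1) by ring]
          calc |(P I - P' I) - (∏ l, e l (I l)) / D ^ (m - 1)|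
              ≤ |P I - P' I| + |(∏ l, e l (I l)) / D ^ (m - 1)| := abs_sub _ _
            _ = (P I - P' I) + (∏ l, e l (I l)) / D ^ (m - 1) := by
                rw [abs_of_nonneg h1, abs_of_nonneg h2]
      _ = D + D := by rw [Finset.sum_add_distrib, ← hD, hsumcorr]
      _ ≤ 2 * ∑ k, vnorm1 (fun j => r k j - r' k j) := by linarith

/-- Hausdorff distance bound used in the proof of Theorem
`thm:LowRankError`: with respect to the metric induced by the ℓ¹-norm,
`d_H(B(r'_1,…,r'_m), B(r_1,…,r_m)) ≤ 2 ∑_k ‖r_k − r'_k‖₁`. -/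
theorem hausdorffDist_transport_polytopes
    {m : ℕ} (hm : 2 ≤ m) {n : Fin m → ℕ}
    (r r' : ∀ k : Fin m, Fin (n k) → ℝ)
    (hr : ∀ k, IsSimplex (r k)) (hr' : ∀ k, IsSimplex (r' k)) :
    Metric.hausdorffDist (BSet r') (BSet r) ≤
      2 * ∑ k, vnorm1 (fun j => r k j - r' k j) := by
  have hm0 : 0 < m := by omega
  have hS : 0 ≤ ∑ k, vnorm1 (fun j => r k j - r' k j) :=
    Finset.sum_nonneg fun k _ => Finset.sum_nonneg fun j _ => abs_nonneg _
  have hsymm : (∑ k, vnorm1 (fun j => r' k j - r k j))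
      = ∑ k, vnorm1 (fun j => r k j - r' k j) :=
    Finset.sum_congr rfl fun k _ => Finset.sum_congr rfl fun j _ => abs_sub_comm _ _
  apply Metric.hausdorffDist_le_of_mem_dist (by linarith)
  · intro x hx
    obtain ⟨Q, hQf, hQd⟩ := approx hm0 r r' hr hr' _ hx
    refine ⟨(WithLp.equiv 1 (Idx n → ℝ)).symm Q, ?_, ?_⟩
    · show Feasible r _
      simpa using hQf
    · rw [dist_pilp]
      exact hQd
  · intro y hy
    obtain ⟨Q, hQf, hQd⟩ := approx hm0 r' r hr' hr _ hy
    refine ⟨(WithLp.equiv 1 (Idx n → ℝ)).symm Q, ?_, ?_⟩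
    · show Feasible r' _
      simpa using hQf
    · rw [dist_pilp]
      exact hQd.trans_eq (by rw [hsymm])

end MOT
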